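/- Reverse Ando inequality: let Φ be a positive unital linear map, t ∈ (0,1), and A, B positive invertible with m·I ≤ A, B ≤ M·I for 0 < m < M. Then Φ(A) #_t Φ(B) ≤ ((m+M)²/(4mM)) · Φ(A #_t B). -/

import Mathlib

open scoped NNReal



lemma scalar_gm_le_am {x t : ℝ} (hx : 0 ≤ x) (ht0 : 0 ≤ t) (ht1 : t ≤ 1) :
    x ^ t ≤ (1 - t) + t * x := by
  have h := Real.geom_mean_le_arith_mean2_weighted (by linarith : (0:ℝ) ≤ 1 - t) ht0
    (by norm_num : (0:ℝ) ≤ 1) hx (by ring)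
  simpa using h

lemma scalar_am_le_gm {m M x t : ℝ} (hm : 0 < m) (hmM : m < M)
    (hx1 : m / M ≤ x) (hx2 : x ≤ M / m) (ht0 : 0 ≤ t) (ht1 : t ≤ 1) :
    (1 - t) + t * x ≤ ((m + M) ^ 2 / (4 * m * M)) * x ^ t := by
  have hM : 0 < M := hm.trans hmM
  have hx0 : 0 < x := lt_of_lt_of_le (by positivity) hx1
  have h1 : x ^ (1 - t) ≤ (1 - t) * x + t := by
    have h := Real.geom_mean_le_arith_mean2_weighted (by linarith : (0:ℝ) ≤ 1 - t) ht0
      hx0.le (by norm_num : (0:ℝ) ≤ 1) (by ring)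
    simpa using h
  have h2 : x ^ t * x ^ (1 - t) = x := by
    rw [← Real.rpow_add hx0]; norm_num
  have hd : 0 < (1 - t) * x + t := by
    rcases le_or_gt x 1 with h | h
    · nlinarith
    · nlinarith
  have h3 : x / ((1 - t) * x + t) ≤ x ^ t := by
    rw [div_le_iff₀ hd]
    calc x = x ^ t * x ^ (1 - t) := h2.symm
    _ ≤ x ^ t * ((1 - t) * x + t) := by
        have : (0:ℝ) ≤ x ^ t := Real.rpow_nonneg hx0.le t
        nlinarith
  have key : ((1 - t) + t * x) * ((1 - t) * x + t) ≤ ((m + M) ^ 2 / (4 * m * M)) * x := by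
    rw [div_mul_eq_mul_div, le_div_iff₀ (by positivity)]
    have hf1 : m * M * (x ^ 2 + 1) ≤ x * (m ^ 2 + M ^ 2) := by
      have e1 : m ≤ x * M := by
        rw [div_le_iff₀ hM] at hx1; linarith
      have e2 : x * m ≤ M := by
        rw [le_div_iff₀ hm] at hx2; linarith
      nlinarith [mul_nonneg (sub_nonneg.2 e1) (sub_nonneg.2 e2)]
    nlinarith [mul_nonneg (mul_nonneg ht0 (by linarith : (0:ℝ) ≤ 1 - t)) (sub_nonneg.2 hf1),
      mul_nonneg (sq_nonneg (2 * t - 1)) (mul_nonneg hx0.le (sq_nonneg (m - M)))]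
  calc (1 - t) + t * x = (((1 - t) + t * x) * ((1 - t) * x + t)) / ((1 - t) * x + t) := by
        field_simp
  _ ≤ (((m + M) ^ 2 / (4 * m * M)) * x) / ((1 - t) * x + t) := by gcongr
  _ = ((m + M) ^ 2 / (4 * m * M)) * (x / ((1 - t) * x + t)) := by ring
  _ ≤ ((m + M) ^ 2 / (4 * m * M)) * x ^ t := by
        exact mul_le_mul_of_nonneg_left h3 (by positivity)



section OpLemmas
variable {E : Type*} [CStarAlgebra E] [PartialOrder E] [StarOrderedRing E]

lemma rpow_eq_real_cfc {a : E} (ha : 0 ≤ a) (y : ℝ) :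
    a ^ y = cfc (fun x : ℝ => x ^ y) a := by
  rw [CFC.rpow_def, cfc_nnreal_eq_real _ a ha]
  apply cfc_congr
  intro x hx
  have hx' : 0 ≤ x := spectrum_nonneg_of_nonneg ha hx
  simp [NNReal.coe_rpow, Real.coe_toNNReal x hx']

lemma cfc_affine {a : E} (ha : IsSelfAdjoint a) (c d : ℝ) :
    cfc (fun x : ℝ => c + d * x) a = c • (1 : E) + d • a := by
  rw [cfc_add .., cfc_const c a ha, cfc_const_mul .., cfc_id' ℝ a ha,
    Algebra.algebraMap_eq_smul_one]

end OpLemmas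

section OpLemmas2
variable {E : Type*} [CStarAlgebra E] [PartialOrder E] [StarOrderedRing E]

set_option linter.unusedSectionVars false

lemma spectrum_subset_Icc {a : E} {r s : ℝ} (ha : IsSelfAdjoint a)
    (h1 : r • (1 : E) ≤ a) (h2 : a ≤ s • (1 : E)) :
    spectrum ℝ a ⊆ Set.Icc r s := by
  intro x hx
  rw [← Algebra.algebraMap_eq_smul_one] at h1 h2
  exact ⟨algebraMap_le_iff_le_spectrum ha |>.mp h1 x hx,
    le_algebraMap_iff_spectrum_le ha |>.mp h2 x hx⟩

-- operator GM ≤ AM for a ≥ 0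
lemma op_rpow_le_affine {a : E} (ha : 0 ≤ a) {t : ℝ} (ht0 : 0 < t) (ht1 : t < 1) :
    a ^ t ≤ (1 - t) • (1 : E) + t • a := by
  rw [rpow_eq_real_cfc ha t, ← cfc_affine (IsSelfAdjoint.of_nonneg ha) (1 - t) t]
  exact cfc_mono (fun x hx => scalar_gm_le_am (spectrum_nonneg_of_nonneg ha hx) ht0.le ht1.le)
    (fun x hx => (Real.continuousAt_rpow_const x t (Or.inr ht0.le)).continuousWithinAt)
    (by fun_prop)

end OpLemmas2

section OpLemmas3
variable {E : Type*} [CStarAlgebra E] [PartialOrder E] [StarOrderedRing E]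
set_option linter.unusedSectionVars false

lemma op_affine_le_rpow {a : E} (ha : 0 ≤ a) {m M t : ℝ} (hm : 0 < m) (hmM : m < M)
    (h1 : (m / M) • (1 : E) ≤ a) (h2 : a ≤ (M / m) • (1 : E))
    (ht0 : 0 < t) (ht1 : t < 1) :
    (1 - t) • (1 : E) + t • a ≤ ((m + M) ^ 2 / (4 * m * M)) • a ^ t := by
  have hsp := spectrum_subset_Icc (IsSelfAdjoint.of_nonneg ha) h1 h2
  have hcont : ContinuousOn (fun x : ℝ => x ^ t) (spectrum ℝ a) :=
    fun x hx => (Real.continuousAt_rpow_const x t (Or.inr ht0.le)).continuousWithinAt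
  have key : cfc (fun x : ℝ => (1 - t) + t * x) a ≤
      cfc (fun x : ℝ => ((m + M) ^ 2 / (4 * m * M)) * x ^ t) a := by
    refine cfc_mono (fun x hx => ?_) (by fun_prop) (by fun_prop (disch := assumption))
    · obtain ⟨hx1, hx2⟩ := hsp hx
      exact scalar_am_le_gm hm hmM hx1 hx2 ht0.le ht1.le
  rw [cfc_affine (IsSelfAdjoint.of_nonneg ha) (1 - t) t,
    cfc_const_mul _ _ _ hcont, ← rpow_eq_real_cfc ha t] at key
  exact key

lemma conj_le_conj {P Q : E} (c : E) (hc : IsSelfAdjoint c) (h : P ≤ Q) :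
    c * P * c ≤ c * Q * c := by
  simpa [hc.star_eq] using star_left_conjugate_le_conjugate h c

end OpLemmas3

section OpLemmas4
variable {E : Type*} [CStarAlgebra E] [PartialOrder E] [StarOrderedRing E]
set_option linter.unusedSectionVars false

lemma gm_le_am (X Y : E) (hX : 0 ≤ X) (hXu : IsUnit X) (hY : 0 ≤ Y)
    {t : ℝ} (ht0 : 0 < t) (ht1 : t < 1) :
    X ^ ((1:ℝ)/2) * (X ^ (-(1:ℝ)/2) * Y * X ^ (-(1:ℝ)/2)) ^ t * X ^ ((1:ℝ)/2)
      ≤ (1 - t) • X + t • Y := by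
  have h0 : 0 ∉ spectrum ℝ≥0 X := spectrum.zero_notMem_iff ℝ≥0 |>.mpr hXu
  set p := X ^ ((1:ℝ)/2) with hp
  set q := X ^ (-(1:ℝ)/2) with hq
  have hpq : p * q = 1 := by
    rw [hp, hq, ← CFC.rpow_add hXu]
    norm_num
    exact CFC.rpow_zero X hX
  have hqp : q * p = 1 := by
    rw [hp, hq, ← CFC.rpow_add hXu]
    norm_num
    exact CFC.rpow_zero X hX
  have hpp : p * p = X := by
    rw [hp, ← CFC.rpow_add hXu]
    norm_num
    exact CFC.rpow_one X hX
  have hpsa : IsSelfAdjoint p := IsSelfAdjoint.of_nonneg CFC.rpow_nonneg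
  set C := q * Y * q with hC
  have hCnn : 0 ≤ C := conjugate_nonneg_of_nonneg hY CFC.rpow_nonneg
  have key := conj_le_conj p hpsa (op_rpow_le_affine hCnn ht0 ht1)
  have e1 : p * ((1 - t) • (1 : E) + t • C) * p = (1 - t) • X + t • Y := by
    have epcp : p * C * p = Y := by
      have : p * (q * Y * q) * p = (p * q) * Y * (q * p) := by
        simp only [mul_assoc]
      rw [hC, this, hpq, hqp, one_mul, mul_one]
    rw [mul_add, add_mul, mul_smul_comm, mul_smul_comm, smul_mul_assoc, smul_mul_assoc,
      mul_one, hpp, epcp]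
  rw [e1] at key
  exact key

end OpLemmas4

section OpLemmas5
variable {E : Type*} [CStarAlgebra E] [PartialOrder E] [StarOrderedRing E]
set_option linter.unusedSectionVars false

lemma am_le_K_gm (X Y : E) (hX : 0 ≤ X) (hXu : IsUnit X) (hY : 0 ≤ Y)
    {m M t : ℝ} (hm : 0 < m) (hmM : m < M)
    (hX1 : m • (1 : E) ≤ X) (hX2 : X ≤ M • (1 : E))
    (hY1 : m • (1 : E) ≤ Y) (hY2 : Y ≤ M • (1 : E))
    (ht0 : 0 < t) (ht1 : t < 1) :
    (1 - t) • X + t • Y ≤ ((m + M) ^ 2 / (4 * m * M)) •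
      (X ^ ((1:ℝ)/2) * (X ^ (-(1:ℝ)/2) * Y * X ^ (-(1:ℝ)/2)) ^ t * X ^ ((1:ℝ)/2)) := by
  have hM : 0 < M := hm.trans hmM
  have h0 : 0 ∉ spectrum ℝ≥0 X := spectrum.zero_notMem_iff ℝ≥0 |>.mpr hXu
  set p := X ^ ((1:ℝ)/2) with hp
  set q := X ^ (-(1:ℝ)/2) with hq
  have hpq : p * q = 1 := by
    rw [hp, hq, ← CFC.rpow_add hXu]; norm_num; exact CFC.rpow_zero X hX
  have hqp : q * p = 1 := by
    rw [hp, hq, ← CFC.rpow_add hXu]; norm_num; exact CFC.rpow_zero X hX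
  have hpp : p * p = X := by
    rw [hp, ← CFC.rpow_add hXu]; norm_num; exact CFC.rpow_one X hX
  have hpsa : IsSelfAdjoint p := IsSelfAdjoint.of_nonneg CFC.rpow_nonneg
  have hqsa : IsSelfAdjoint q := IsSelfAdjoint.of_nonneg CFC.rpow_nonneg
  have hqXq : q * X * q = 1 := by
    have he : (-(1:ℝ)/2) = (-(1/2) : ℝ) := by norm_num
    rw [hq, he]
    exact CFC.conjugate_rpow_neg_one_half X (hXu.isStrictlyPositive hX)
  set C := q * Y * q with hC
  set D := q * 1 * q with hD
  have hCnn : 0 ≤ C := conjugate_nonneg_of_nonneg hY CFC.rpow_nonneg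
  -- conjugate bounds
  have hmD : m • D ≤ 1 := by
    have := conj_le_conj q hqsa hX1
    rwa [hqXq, mul_smul_comm, smul_mul_assoc, ← hD] at this
  have hMD : (1 : E) ≤ M • D := by
    have := conj_le_conj q hqsa hX2
    rwa [hqXq, mul_smul_comm, smul_mul_assoc, ← hD] at this
  have hC1 : (m / M) • (1 : E) ≤ C := by
    have h1 : (m / M) • (1 : E) ≤ (m / M) • (M • D) :=
      smul_le_smul_of_nonneg_left hMD (by positivity)
    have h2 : (m / M) • (M • D) = m • D := by
      rw [smul_smul, div_mul_cancel₀]; exact hM.ne'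
    have h3 : m • D ≤ C := by
      have := conj_le_conj q hqsa hY1
      rwa [mul_smul_comm, smul_mul_assoc, ← hD, ← hC] at this
    calc (m / M) • (1 : E) ≤ (m / M) • (M • D) := h1
    _ = m • D := h2
    _ ≤ C := h3
  have hC2 : C ≤ (M / m) • (1 : E) := by
    have h3 : C ≤ M • D := by
      have := conj_le_conj q hqsa hY2
      rwa [mul_smul_comm, smul_mul_assoc, ← hD, ← hC] at this
    have h2 : (M / m) • (m • D) = M • D := by
      rw [smul_smul, div_mul_cancel₀]; exact hm.ne'
    have h1 : (M / m) • (m • D) ≤ (M / m) • (1 : E) :=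
      smul_le_smul_of_nonneg_left hmD (by positivity)
    calc C ≤ M • D := h3
    _ = (M / m) • (m • D) := h2.symm
    _ ≤ (M / m) • (1 : E) := h1
  have key := conj_le_conj p hpsa (op_affine_le_rpow hCnn hm hmM hC1 hC2 ht0 ht1)
  have e1 : p * ((1 - t) • (1 : E) + t • C) * p = (1 - t) • X + t • Y := by
    have epcp : p * C * p = Y := by
      have : p * (q * Y * q) * p = (p * q) * Y * (q * p) := by
        simp only [mul_assoc]
      rw [hC, this, hpq, hqp, one_mul, mul_one]
    rw [mul_add, add_mul, mul_smul_comm, mul_smul_comm, smul_mul_assoc, smul_mul_assoc,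
      mul_one, hpp, epcp]
  have e2 : p * (((m + M) ^ 2 / (4 * m * M)) • C ^ t) * p
      = ((m + M) ^ 2 / (4 * m * M)) • (p * C ^ t * p) := by
    rw [mul_smul_comm, smul_mul_assoc]
  rw [e1, e2] at key
  exact key

end OpLemmas5


/-- The `t`-weighted geometric mean `A #_t B = A^{1/2} (A^{-1/2} B A^{-1/2})^t A^{1/2}`,
defined via the continuous functional calculus real power. -/
noncomputable def geomMean {H : Type*} [NormedAddCommGroup H] [InnerProductSpace ℂ H]
    [CompleteSpace H] (A B : H →L[ℂ] H) (t : ℝ) : H →L[ℂ] H :=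
  A ^ ((1 : ℝ) / 2) * (A ^ (-(1 : ℝ) / 2) * B * A ^ (-(1 : ℝ) / 2)) ^ t * A ^ ((1 : ℝ) / 2)

set_option synthInstance.maxHeartbeats 1000000 in
set_option maxHeartbeats 1000000 in
/-- Reverse Ando inequality: for a positive unital linear map `Φ`, `t ∈ (0,1)`, and
positive invertible `A, B` with `m • 1 ≤ A, B ≤ M • 1`, `0 < m < M`, one has
`Φ(A) #ₜ Φ(B) ≤ ((m+M)²/(4mM)) • Φ(A #ₜ B)`. -/
theorem reverse_ando_inequality
    {H K : Type*} [NormedAddCommGroup H] [InnerProductSpace ℂ H] [CompleteSpace H]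
    [NormedAddCommGroup K] [InnerProductSpace ℂ K] [CompleteSpace K]
    (Φ : (H →L[ℂ] H) →ₗ[ℂ] (K →L[ℂ] K))
    (hΦ1 : Φ 1 = 1) (hΦpos : ∀ a : H →L[ℂ] H, 0 ≤ a → 0 ≤ Φ a)
    (A B : H →L[ℂ] H) (hA : 0 ≤ A) (hB : 0 ≤ B)
    (hAinv : Invertible A) (hBinv : Invertible B)
    (m M : ℝ) (hm : 0 < m) (hmM : m < M)
    (hA1 : m • (1 : H →L[ℂ] H) ≤ A) (hA2 : A ≤ M • (1 : H →L[ℂ] H))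
    (hB1 : m • (1 : H →L[ℂ] H) ≤ B) (hB2 : B ≤ M • (1 : H →L[ℂ] H))
    (t : ℝ) (ht0 : 0 < t) (ht1 : t < 1) :
    geomMean (Φ A) (Φ B) t ≤ ((m + M) ^ 2 / (4 * m * M)) • Φ (geomMean A B t) := by
  have hM : 0 < M := hm.trans hmM
  have hmono : ∀ a b : H →L[ℂ] H, a ≤ b → Φ a ≤ Φ b := fun a b h => by
    have := hΦpos (b - a) (sub_nonneg.2 h)
    rw [map_sub] at this
    exact sub_nonneg.1 this
  have hsmul : ∀ (r : ℝ) (x : H →L[ℂ] H), Φ (r • x) = r • Φ x := fun r x => by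
    rw [← Complex.coe_smul, map_smul, Complex.coe_smul]
  have hΦsc : ∀ r : ℝ, Φ (r • (1 : H →L[ℂ] H)) = r • (1 : K →L[ℂ] K) := fun r => by
    rw [hsmul, hΦ1]
  have hΦA1 : m • (1 : K →L[ℂ] K) ≤ Φ A := by
    have := hmono _ _ hA1; rwa [hΦsc] at this
  have hΦA2 : Φ A ≤ M • (1 : K →L[ℂ] K) := by
    have := hmono _ _ hA2; rwa [hΦsc] at this
  have hsm1u : IsUnit (m • (1 : K →L[ℂ] K)) := by
    refine ⟨⟨m • 1, m⁻¹ • 1, ?_, ?_⟩, rfl⟩ <;>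
      simp [smul_smul, mul_inv_cancel₀ hm.ne', inv_mul_cancel₀ hm.ne']
  have hsm1nn : (0 : K →L[ℂ] K) ≤ m • 1 := smul_nonneg hm.le zero_le_one
  have hΦAu : IsUnit (Φ A) := CStarAlgebra.isUnit_of_le _ hΦA1 (hsm1u.isStrictlyPositive hsm1nn)
  have hΦAnn : 0 ≤ Φ A := hΦpos A hA
  have hΦBnn : 0 ≤ Φ B := hΦpos B hB
  calc geomMean (Φ A) (Φ B) t
      ≤ (1 - t) • Φ A + t • Φ B := gm_le_am (Φ A) (Φ B) hΦAnn hΦAu hΦBnn ht0 ht1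
  _ = Φ ((1 - t) • A + t • B) := by rw [map_add, hsmul, hsmul]
  _ ≤ Φ (((m + M) ^ 2 / (4 * m * M)) • geomMean A B t) :=
      hmono _ _ (am_le_K_gm A B hA (isUnit_of_invertible A) hB hm hmM hA1 hA2 hB1 hB2 ht0 ht1)
  _ = ((m + M) ^ 2 / (4 * m * M)) • Φ (geomMean A B t) := hsmul _ _
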